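/- For every nonnegative integer k and every complex z with Re(z) > 0, the inverse power admits the convergent factorial series 1/z^{k+1} = Σ_{κ=0}^{∞} (-1)^κ S¹(k+κ, k) / ((z)_{k+κ+1}). -/

import Mathlib

open Filter

noncomputable def poch (z : ℂ) (m : ℕ) : ℂ := ∏ i ∈ Finset.range m, (z + i)

def S1 : ℕ → ℕ → ℤ
  | 0, 0 => 1
  | 0, _ + 1 => 0
  | n + 1, 0 => -(n : ℤ) * S1 n 0
  | n + 1, k + 1 => S1 n k - (n : ℤ) * S1 n (k + 1)

def cS : ℕ → ℕ → ℕ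
  | 0, 0 => 1
  | 0, _ + 1 => 0
  | _ + 1, 0 => 0
  | n + 1, k + 1 => cS n k + n * cS n (k + 1)

lemma cS_eq_zero : ∀ {n k : ℕ}, n < k → cS n k = 0
  | 0, _ + 1, _ => rfl
  | n + 1, k + 1, h => by
    have h1 : n < k := Nat.lt_of_succ_lt_succ h
    show cS n k + n * cS n (k + 1) = 0
    rw [cS_eq_zero h1, cS_eq_zero (h1.trans (Nat.lt_succ_self k))]
    simp

lemma poch_zero (z : ℂ) : poch z 0 = 1 := by simp [poch]

lemma poch_succ (z : ℂ) (m : ℕ) : poch z (m + 1) = poch z m * (z + m) :=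
  Finset.prod_range_succ _ _

noncomputable def pr (x : ℝ) (m : ℕ) : ℝ := ∏ i ∈ Finset.range m, (x + i)

lemma pr_pos {x : ℝ} (hx : 0 < x) (m : ℕ) : 0 < pr x m :=
  Finset.prod_pos fun i _ => by positivity

lemma pr_succ (x : ℝ) (m : ℕ) : pr x (m + 1) = pr x m * (x + m) :=
  Finset.prod_range_succ _ _

lemma pr_le_norm_poch {z : ℂ} (hz : 0 < z.re) (m : ℕ) : pr z.re m ≤ ‖poch z m‖ := by
  rw [poch, norm_prod]
  apply Finset.prod_le_prod
  · intro i _; positivity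
  · intro i _
    calc z.re + (i : ℝ) = (z + i).re := by simp
      _ ≤ ‖z + (i : ℂ)‖ := Complex.re_le_norm _
      _ = ‖z + (i : ℂ)‖ := rfl

lemma poch_ne_zero {z : ℂ} (hz : 0 < z.re) (m : ℕ) : poch z m ≠ 0 := by
  intro h
  have h1 := pr_le_norm_poch hz m
  rw [h] at h1
  simp at h1
  linarith [pr_pos hz m]

def dd : ℕ → ℕ → ℕ
  | 0, 0 => 1
  | _ + 1, 0 => 0
  | N, j + 1 => (N + j) * cS (N + j) (j + 1)

lemma dd_succ (N j : ℕ) : dd N (j + 1) = (N + j) * cS (N + j) (j + 1) := by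
  cases N <;> rfl

noncomputable def Rr (z : ℂ) (k N : ℕ) : ℂ :=
  ∑ j ∈ Finset.range (k + 1), (dd N j : ℂ) / (z ^ (k + 1 - j) * poch z (N + j))

lemma Rr_zero (z : ℂ) (k : ℕ) : Rr z k 0 = 1 / z ^ (k + 1) := by
  rw [Rr, Finset.sum_range_succ']
  have h1 : ∀ j ∈ Finset.range k,
      (dd 0 (j + 1) : ℂ) / (z ^ (k + 1 - (j + 1)) * poch z (0 + (j + 1))) = 0 := by
    intro j _
    have hd : dd 0 (j + 1) = 0 := by
      show (0 + j) * cS (0 + j) (j + 1) = 0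
      rw [Nat.zero_add, cS_eq_zero (Nat.lt_succ_self j)]
      simp
    rw [hd]; simp
  rw [Finset.sum_congr rfl h1]
  simp [dd, poch_zero]

lemma Rr_succ_k (z : ℂ) (k N : ℕ) :
    Rr z (k + 1) N = (Rr z k N + (dd N (k + 1) : ℂ) / poch z (N + (k + 1))) / z := by
  rw [Rr, Finset.sum_range_succ, Rr]
  have h1 : ∀ j ∈ Finset.range (k + 1),
      (dd N j : ℂ) / (z ^ (k + 1 + 1 - j) * poch z (N + j))
        = (dd N j : ℂ) / (z ^ (k + 1 - j) * poch z (N + j)) / z := by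
    intro j hj
    have hj' : j ≤ k := Nat.lt_succ_iff.mp (Finset.mem_range.mp hj)
    rw [show k + 1 + 1 - j = (k + 1 - j) + 1 by omega, pow_succ]
    rw [div_div]
    ring_nf
  rw [Finset.sum_congr rfl h1, ← Finset.sum_div]
  rw [show k + 1 + 1 - (k + 1) = 1 by omega, pow_one]
  rw [add_div]
  congr 1
  rw [div_div, mul_comm]

lemma alg (B a b n z P : ℂ) (hz : z ≠ 0) (hP : P ≠ 0) (hw : z + (n + 1) ≠ 0) :
    ((B + a / P + n * b / P) - (B + (n + 1) * (a + n * b) / (P * (z + (n + 1))))) / z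
      = (a + n * b) / (P * (z + (n + 1))) := by
  field_simp
  ring

lemma Rr_step (z : ℂ) (hz : 0 < z.re) (k : ℕ) : ∀ N : ℕ,
    Rr z k N - Rr z k (N + 1) = (cS (k + N) k : ℂ) / poch z (k + N + 1) := by
  have hzz : z ≠ 0 := by
    intro h; rw [h] at hz; simp at hz
  induction k with
  | zero =>
    intro N
    have e : ∀ M : ℕ, Rr z 0 M = (dd M 0 : ℂ) / (z ^ 1 * poch z (M + 0)) := by
      intro M; rw [Rr, Finset.sum_range_one]
    rw [e, e]
    cases N with
    | zero =>
      show (dd 0 0 : ℂ) / _ - (dd 1 0 : ℂ) / _ = _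
      have h1 : dd 0 0 = 1 := rfl
      have h2 : dd 1 0 = 0 := rfl
      have h3 : cS 0 0 = 1 := rfl
      rw [h1, h2, h3, poch_succ, poch_zero]
      simp
    | succ M =>
      have h1 : dd (M + 1) 0 = 0 := rfl
      have h2 : dd (M + 1 + 1) 0 = 0 := rfl
      have h3 : cS (0 + (M + 1)) 0 = 0 := by
        show cS (M + 1) 0 = 0
        rfl
      rw [h1, h2, h3]
      simp
  | succ k ih =>
    intro N
    have hP : poch z (N + (k + 1)) ≠ 0 := poch_ne_zero hz _
    have hw : z + ((N + (k + 1) : ℕ) : ℂ) ≠ 0 := by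
      intro h
      have h2 : z.re + ((N + (k + 1) : ℕ) : ℝ) = 0 := by
        have := congrArg Complex.re h
        simpa using this
      have h3 : (0 : ℝ) ≤ ((N + (k + 1) : ℕ) : ℝ) := Nat.cast_nonneg _
      linarith
    rw [Rr_succ_k, Rr_succ_k, div_sub_div_same]
    -- rewrite Rr z k N using ih
    have hA : Rr z k N = Rr z k (N + 1) + (cS (k + N) k : ℂ) / poch z (k + N + 1) := by
      rw [← ih N]; ring
    rw [hA]
    -- normalize indices
    have e1 : k + N + 1 = N + (k + 1) := by omega
    have e2 : N + 1 + (k + 1) = (N + (k + 1)) + 1 := by omega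
    rw [e1, e2, poch_succ]
    -- cast dd and cS
    have hdd1 : (dd N (k + 1) : ℂ) = ((N + k : ℕ) : ℂ) * ((cS (N + k) (k + 1) : ℕ) : ℂ) := by
      rw [dd_succ]
      push_cast; ring
    have hdd2 : (dd (N + 1) (k + 1) : ℂ)
        = (((N + k : ℕ) : ℂ) + 1) * (((cS (N + k) k : ℕ) : ℂ)
            + ((N + k : ℕ) : ℂ) * ((cS (N + k) (k + 1) : ℕ) : ℂ)) := by
      rw [dd_succ, show N + 1 + k = (N + k) + 1 by omega]
      have : cS ((N + k) + 1) (k + 1) = cS (N + k) k + (N + k) * cS (N + k) (k + 1) := rfl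
      rw [this]
      push_cast; ring
    have hcs : (cS (k + 1 + N) (k + 1) : ℂ)
        = ((cS (N + k) k : ℕ) : ℂ) + ((N + k : ℕ) : ℂ) * ((cS (N + k) (k + 1) : ℕ) : ℂ) := by
      rw [show k + 1 + N = (N + k) + 1 by omega]
      have : cS ((N + k) + 1) (k + 1) = cS (N + k) k + (N + k) * cS (N + k) (k + 1) := rfl
      rw [this]; push_cast; ring
    have hcn : (cS (k + N) k : ℂ) = ((cS (N + k) k : ℕ) : ℂ) := by
      rw [show k + N = N + k by omega]
    have hz1 : ((N + (k + 1) : ℕ) : ℂ) = ((N + k : ℕ) : ℂ) + 1 := by push_cast; ring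
    rw [hdd1, hdd2, hcs, hcn, hz1]
    rw [show k + 1 + N + 1 = (N + (k + 1)) + 1 by omega, poch_succ, hz1]
    exact alg _ _ _ _ _ _ hzz hP (by rw [← hz1]; exact hw)

lemma partial_sum (z : ℂ) (hz : 0 < z.re) (k : ℕ) : ∀ N : ℕ,
    ∑ κ ∈ Finset.range N, (cS (k + κ) k : ℂ) / poch z (k + κ + 1)
      = 1 / z ^ (k + 1) - Rr z k N := by
  intro N
  induction N with
  | zero => simp [Rr_zero]
  | succ N ihN =>
    rw [Finset.sum_range_succ, ihN]
    rw [← Rr_step z hz k N]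
    ring

lemma tele (K : ℕ) (hK : 1 ≤ K) : ∀ n : ℕ, K ≤ n →
    ∏ m ∈ Finset.Ico K n, ((m : ℝ) / ((m : ℝ) + 1)) = (K : ℝ) / n := by
  intro n hn
  induction n, hn using Nat.le_induction with
  | base =>
    rw [Finset.Ico_self, Finset.prod_empty]
    have : (K : ℝ) ≠ 0 := by positivity
    rw [div_self this]
  | succ n hn ihn =>
    rw [Finset.prod_Ico_succ_top hn, ihn]
    have hn0 : (n : ℝ) ≠ 0 := by
      have : 1 ≤ n := le_trans hK hn
      positivity
    have hn1 : (n : ℝ) + 1 ≠ 0 := by positivity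
    push_cast
    field_simp

lemma prodB {x : ℝ} (hx : 0 < x) (K : ℕ) (hK : 1 ≤ K) :
    Tendsto (fun n => ∏ m ∈ Finset.Ico K n, ((m : ℝ) / ((m : ℝ) + x))) atTop (nhds 0) := by
  set y := min x 1 with hy
  have hy0 : 0 < y := lt_min hx one_pos
  have hy1 : y ≤ 1 := min_le_right _ _
  have hyx : y ≤ x := min_le_left _ _
  have key : ∀ m : ℕ, 1 ≤ m → (m : ℝ) / ((m : ℝ) + x) ≤ ((m : ℝ) / ((m : ℝ) + 1)) ^ y := by
    intro m hm
    have hm0 : (0 : ℝ) < m := by exact_mod_cast hm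
    have h1 : (m : ℝ) / ((m : ℝ) + x) ≤ (m : ℝ) / ((m : ℝ) + y) := by
      apply div_le_div_of_nonneg_left hm0.le (by linarith) (by linarith)
    have hub : (((m : ℝ) + 1) / m) ^ y ≤ ((m : ℝ) + y) / m := by
      have hber := rpow_one_add_le_one_add_mul_self
        (s := 1 / (m : ℝ)) (le_trans (by norm_num) (by positivity : (0:ℝ) ≤ 1 / (m:ℝ))) hy0.le hy1
      calc (((m : ℝ) + 1) / m) ^ y = (1 + 1 / (m : ℝ)) ^ y := by
            rw [add_div, div_self hm0.ne']
        _ ≤ 1 + y * (1 / (m : ℝ)) := hber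
        _ = ((m : ℝ) + y) / m := by field_simp
    have hpos : (0 : ℝ) < (((m : ℝ) + 1) / m) ^ y :=
      Real.rpow_pos_of_pos (by positivity) _
    have h2 : (m : ℝ) / ((m : ℝ) + y) ≤ ((m : ℝ) / ((m : ℝ) + 1)) ^ y := by
      have hinv := inv_anti₀ hpos hub
      rwa [← Real.inv_rpow (by positivity), inv_div, inv_div] at hinv
    exact h1.trans h2
  have hg0 : Tendsto (fun n : ℕ => ((K : ℝ) / n) ^ y) atTop (nhds 0) := by
    have h0 := (tendsto_const_div_atTop_nhds_zero_nat (K : ℝ)).rpow_const (Or.inr hy0.le)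
    rwa [Real.zero_rpow hy0.ne'] at h0
  refine squeeze_zero' ?_ ?_ hg0
  · filter_upwards with n
    apply Finset.prod_nonneg
    intro m _; positivity
  · filter_upwards [eventually_ge_atTop K] with n hn
    calc ∏ m ∈ Finset.Ico K n, ((m : ℝ) / ((m : ℝ) + x))
        ≤ ∏ m ∈ Finset.Ico K n, ((m : ℝ) / ((m : ℝ) + 1)) ^ y := by
          apply Finset.prod_le_prod
          · intro m _; positivity
          · intro m hm
            exact key m (le_trans hK (Finset.mem_Ico.mp hm).1)
      _ = (∏ m ∈ Finset.Ico K n, ((m : ℝ) / ((m : ℝ) + 1))) ^ y :=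
          Real.finset_prod_rpow _ _ (fun m _ => by positivity) y
      _ = ((K : ℝ) / n) ^ y := by rw [tele K hK n hn]

lemma cS_succ_succ (n j : ℕ) : cS (n + 1) (j + 1) = cS n j + n * cS n (j + 1) := rfl

lemma lemA : ∀ (j : ℕ) {x : ℝ}, 0 < x →
    Tendsto (fun n => (cS n j : ℝ) / pr x n) atTop (nhds 0) := by
  intro j
  induction j with
  | zero =>
    intro x hx
    apply Tendsto.congr' _ (tendsto_const_nhds (x := (0:ℝ)))
    filter_upwards [eventually_ge_atTop 1] with n hn
    obtain ⟨m, rfl⟩ := Nat.exists_eq_add_of_le hn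
    have : cS (1 + m) 0 = 0 := by
      rw [Nat.add_comm]; rfl
    rw [this]
    simp
  | succ j ih =>
    intro x hx
    have hb := ih hx
    rw [Metric.tendsto_atTop]
    intro ε hε
    obtain ⟨K₁', hK₁'⟩ := (Metric.tendsto_atTop.1 hb) (x * ε / 2) (by positivity)
    set K₁ := max K₁' 1 with hK₁def
    have hK₁1 : 1 ≤ K₁ := le_max_right _ _
    have hK₁b : ∀ n, K₁ ≤ n → (cS n j : ℝ) / pr x n ≤ x * ε / 2 := by
      intro n hn
      have h := hK₁' n (le_trans (le_max_left _ _) hn)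
      rw [Real.dist_eq, sub_zero] at h
      exact le_of_lt (lt_of_abs_lt h)
    set a : ℕ → ℝ := fun n => (cS n (j + 1) : ℝ) / pr x n with ha
    have ha_nonneg : ∀ n, 0 ≤ a n := fun n =>
      div_nonneg (Nat.cast_nonneg _) (pr_pos hx _).le
    set p : ℕ → ℝ := fun n => ∏ m ∈ Finset.Ico K₁ n, ((m : ℝ) / ((m : ℝ) + x)) with hp
    have main : ∀ n, K₁ ≤ n → a n ≤ p n * a K₁ + ε / 2 := by
      intro n hn
      induction n, hn using Nat.le_induction with
      | base =>
        have : p K₁ = 1 := by rw [hp]; simp [Finset.Ico_self]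
        rw [this, one_mul]
        linarith [half_pos hε]
      | succ n hn ihn =>
        have hxn : (0 : ℝ) < (n : ℝ) + x := by positivity
        have hprn : (0 : ℝ) < pr x n := pr_pos hx n
        have hrec : a (n + 1) = (cS n j : ℝ) / pr x n / ((n : ℝ) + x)
            + ((n : ℝ) / ((n : ℝ) + x)) * a n := by
          rw [ha]
          show (cS (n + 1) (j + 1) : ℝ) / pr x (n + 1) = _
          rw [pr_succ, cS_succ_succ]
          push_cast
          field_simp
          ring
        have hb' : (cS n j : ℝ) / pr x n ≤ x * ε / 2 := hK₁b n hn
        have h1 : (cS n j : ℝ) / pr x n / ((n : ℝ) + x) ≤ (x * ε / 2) / ((n : ℝ) + x) :=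
          div_le_div_of_nonneg_right hb' hxn.le
        have hq : (0 : ℝ) ≤ (n : ℝ) / ((n : ℝ) + x) := by positivity
        have h2 : ((n : ℝ) / ((n : ℝ) + x)) * a n
            ≤ ((n : ℝ) / ((n : ℝ) + x)) * (p n * a K₁ + ε / 2) :=
          mul_le_mul_of_nonneg_left ihn hq
        have hps : p (n + 1) = p n * ((n : ℝ) / ((n : ℝ) + x)) := by
          rw [hp]
          exact Finset.prod_Ico_succ_top hn _
        have heq : (x * ε / 2) / ((n : ℝ) + x)
            + ((n : ℝ) / ((n : ℝ) + x)) * (p n * a K₁ + ε / 2)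
            = p (n + 1) * a K₁ + ε / 2 := by
          rw [hps]
          field_simp
          ring
        calc a (n + 1) = (cS n j : ℝ) / pr x n / ((n : ℝ) + x)
              + ((n : ℝ) / ((n : ℝ) + x)) * a n := hrec
          _ ≤ (x * ε / 2) / ((n : ℝ) + x)
              + ((n : ℝ) / ((n : ℝ) + x)) * (p n * a K₁ + ε / 2) := add_le_add h1 h2
          _ = p (n + 1) * a K₁ + ε / 2 := heq
    have hptend : Tendsto (fun n => p n * a K₁) atTop (nhds 0) := by
      have := (prodB hx K₁ hK₁1).mul_const (a K₁)
      simpa only [zero_mul] using this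
    obtain ⟨K₂, hK₂⟩ := (Metric.tendsto_atTop.1 hptend) (ε / 2) (by positivity)
    refine ⟨max K₁ K₂, fun n hn => ?_⟩
    have h1 := main n (le_trans (le_max_left _ _) hn)
    have h2 := hK₂ n (le_trans (le_max_right _ _) hn)
    rw [Real.dist_eq, sub_zero] at h2 ⊢
    have h3 : p n * a K₁ < ε / 2 := lt_of_abs_lt h2
    rw [abs_of_nonneg (ha_nonneg n)]
    calc a n ≤ p n * a K₁ + ε / 2 := h1
      _ < ε / 2 + ε / 2 := by linarith
      _ = ε := by ring

lemma lemA' (j : ℕ) {x : ℝ} (hx : 0 < x) :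
    Tendsto (fun n : ℕ => ((n : ℝ) * (cS n (j + 1) : ℝ)) / pr x (n + 1)) atTop (nhds 0) := by
  have h := (lemA (j + 1) hx).comp (tendsto_add_atTop_nat 1)
  apply squeeze_zero (fun n => div_nonneg (by positivity) (pr_pos hx _).le) _ h
  intro n
  show ((n : ℝ) * (cS n (j + 1) : ℝ)) / pr x (n + 1) ≤ (cS (n + 1) (j + 1) : ℝ) / pr x (n + 1)
  apply div_le_div_of_nonneg_right ?_ (pr_pos hx _).le
  rw [cS_succ_succ]
  push_cast
  have : (0 : ℝ) ≤ (cS n j : ℝ) := Nat.cast_nonneg _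
  linarith

lemma S1_eq : ∀ n k : ℕ, S1 n k = (-1 : ℤ) ^ (n + k) * cS n k
  | 0, 0 => by simp [S1, cS]
  | 0, k + 1 => by simp [S1, cS]
  | n + 1, 0 => by
    show -(n : ℤ) * S1 n 0 = _
    rw [S1_eq n 0]
    cases n with
    | zero => simp [cS]
    | succ m =>
      have h1 : cS (m + 1) 0 = 0 := rfl
      have h2 : cS (m + 1 + 1) 0 = 0 := rfl
      rw [h1, h2]; simp
  | n + 1, k + 1 => by
    show S1 n k - (n : ℤ) * S1 n (k + 1) = _
    rw [S1_eq n k, S1_eq n (k + 1)]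
    have e : cS (n + 1) (k + 1) = cS n k + n * cS n (k + 1) := rfl
    rw [e, show n + 1 + (k + 1) = (n + k) + 2 by ring, show n + (k + 1) = (n + k) + 1 by ring,
      pow_add, pow_add, pow_one]
    push_cast
    ring

theorem stmt15 (k : ℕ) (z : ℂ) (hz : 0 < z.re) :
    Tendsto
      (fun N => ∑ κ ∈ Finset.range N, (-1) ^ κ * (S1 (k + κ) k : ℂ) / poch z (k + κ + 1))
      atTop (nhds (1 / z ^ (k + 1))) := by
  have hx : (0 : ℝ) < z.re := hz
  have hzre : z.re ≤ ‖z‖ := by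
    exact Complex.re_le_norm z
  have hR : Tendsto (fun N => Rr z k N) atTop (nhds 0) := by
    have h0 : (0 : ℂ) = ∑ _j ∈ Finset.range (k + 1), (0 : ℂ) := by simp
    rw [show (nhds (0 : ℂ)) = nhds (∑ _j ∈ Finset.range (k + 1), (0 : ℂ)) from by rw [← h0]]
    apply tendsto_finset_sum
    intro j _
    match j with
    | 0 =>
      apply Tendsto.congr' _ (tendsto_const_nhds (x := (0 : ℂ)))
      filter_upwards [eventually_ge_atTop 1] with N hN
      obtain ⟨M, rfl⟩ := Nat.exists_eq_add_of_le hN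
      have hd : dd (1 + M) 0 = 0 := by rw [Nat.add_comm]; rfl
      rw [hd]
      simp
    | j + 1 =>
      set g : ℕ → ℝ := fun N =>
        (((N + j : ℕ) : ℝ) * (cS (N + j) (j + 1) : ℝ)) / (z.re ^ (k - j) * pr z.re (N + j + 1))
        with hg
      have hgt : Tendsto g atTop (nhds 0) := by
        have h2 := ((lemA' j hx).comp (tendsto_add_atTop_nat j)).const_mul
          (1 / z.re ^ (k - j))
        rw [mul_zero] at h2
        apply h2.congr
        intro N
        show 1 / z.re ^ (k - j) * ((((N + j : ℕ) : ℝ) * (cS (N + j) (j + 1) : ℝ)) / pr z.re (N + j + 1)) = g N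
        rw [hg]
        field_simp
      apply squeeze_zero_norm _ hgt
      intro N
      have hkj : k + 1 - (j + 1) = k - j := by omega
      show ‖(dd N (j + 1) : ℂ) / (z ^ (k + 1 - (j + 1)) * poch z (N + (j + 1)))‖ ≤ g N
      rw [hkj, norm_div, norm_mul, norm_pow]
      have hnum : ‖(dd N (j + 1) : ℂ)‖ = ((N + j : ℕ) : ℝ) * (cS (N + j) (j + 1) : ℝ) := by
        rw [show ((dd N (j + 1) : ℕ) : ℂ) = (((dd N (j + 1) : ℕ) : ℝ) : ℂ) from by push_cast; rfl]
        rw [Complex.norm_real, Real.norm_eq_abs, abs_of_nonneg (Nat.cast_nonneg _)]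
        rw [dd_succ]
        push_cast
        ring
      rw [hnum]
      have hNj : N + (j + 1) = N + j + 1 := by omega
      rw [hNj]
      have hden1 : (0 : ℝ) < z.re ^ (k - j) * pr z.re (N + j + 1) := by
        have := pr_pos hx (N + j + 1)
        positivity
      have hden2 : z.re ^ (k - j) * pr z.re (N + j + 1) ≤ ‖z‖ ^ (k - j) * ‖poch z (N + j + 1)‖ := by
        apply mul_le_mul
        · exact pow_le_pow_left₀ hx.le hzre _
        · exact pr_le_norm_poch hz _
        · exact (pr_pos hx _).le
        · positivity
      rw [hg]
      apply div_le_div_of_nonneg_left _ hden1 hden2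
      positivity
  have hmain : Tendsto (fun N => 1 / z ^ (k + 1) - Rr z k N) atTop (nhds (1 / z ^ (k + 1))) := by
    have h := (tendsto_const_nhds (x := 1 / z ^ (k + 1)) (f := (atTop : Filter ℕ))).sub hR
    simpa using h
  apply hmain.congr
  intro N
  rw [← partial_sum z hz k N]
  apply Finset.sum_congr rfl
  intro κ _
  have h := S1_eq (k + κ) k
  have hsq : ((-1 : ℂ)) ^ κ * (-1 : ℂ) ^ κ = 1 := by
    rw [← pow_add, ← two_mul, pow_mul]
    norm_num
  congr 1
  push_cast [h]
  rw [show k + κ + k = κ + 2 * k by ring, pow_add, pow_mul]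
  norm_num
  rw [← mul_assoc, hsq, one_mul]
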